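/- arXiv:1201.0662 — 2 statements merged into one kernel-verified Lean document; each statement's English description precedes it below -/
import Mathlib

section
/- For all z ≥ 0, the standard normal CDF satisfies F_Z(z) ≥ 1 − (1/2)·exp(−√(2/π)·z), where F_Z(z) = (1/√(2π)) ∫_{−∞}^{z} e^{−t²/2} dt. -/
open MeasureTheory Set

private lemma gauss_integrable : Integrable (fun t : ℝ => Real.exp (-t ^ 2 / 2)) := by
  have h : (fun t : ℝ => Real.exp (-t ^ 2 / 2)) = fun t : ℝ => Real.exp (-(1/2) * t ^ 2) := by
    funext t; ring_nf
  rw [h]; exact integrable_exp_neg_mul_sq (by norm_num)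

private lemma gauss_total : ∫ t : ℝ, Real.exp (-t ^ 2 / 2) = Real.sqrt (2 * Real.pi) := by
  have h : (fun t : ℝ => Real.exp (-t ^ 2 / 2)) = fun t : ℝ => Real.exp (-(1/2) * t ^ 2) := by
    funext t; ring_nf
  rw [h, integral_gaussian]
  rw [show Real.pi / (1/2) = 2 * Real.pi by ring]

private lemma gauss_half : ∫ t in Ioi (0:ℝ), Real.exp (-t ^ 2 / 2) = Real.sqrt (2 * Real.pi) / 2 := by
  have h : (fun t : ℝ => Real.exp (-t ^ 2 / 2)) = fun t : ℝ => Real.exp (-(1/2) * t ^ 2) := by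
    funext t; ring_nf
  rw [h, integral_gaussian_Ioi]
  rw [show Real.pi / (1/2) = 2 * Real.pi by ring]

private lemma exp_Ioi (b c : ℝ) (hb : 0 < b) :
    ∫ x in Ioi c, Real.exp (-b * x) = Real.exp (-b * c) / b := by
  have h1 : Filter.Tendsto (fun x : ℝ => -b * x) Filter.atTop Filter.atBot :=
    Filter.Tendsto.const_mul_atTop_of_neg (neg_neg_iff_pos.mpr hb) Filter.tendsto_id
  have htend : Filter.Tendsto (fun x : ℝ => -(Real.exp (-b * x) / b)) Filter.atTop (nhds 0) := by
    have h2 := (Real.tendsto_exp_atBot.comp h1).div_const b |>.neg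
    simpa using h2
  have h := integral_Ioi_of_hasDerivAt_of_tendsto'
    (f := fun x : ℝ => -(Real.exp (-b * x) / b))
    (f' := fun x : ℝ => Real.exp (-b * x)) (a := c) (m := 0)
    (fun x _ => by
      have h1 : HasDerivAt (fun x : ℝ => -b * x) (-b) x := by
        simpa using (hasDerivAt_id x).const_mul (-b)
      have h2 := ((h1.exp).div_const b).neg
      convert h2 using 1
      · rfl
      · rw [mul_neg, neg_div, neg_neg, mul_div_assoc, div_self hb.ne', mul_one])
    (exp_neg_integrableOn_Ioi c hb) htend
  rw [h]; field_simp; ring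

/-- Lower bound on the standard normal CDF:
    F_Z(z) ≥ 1 - (1/2)·exp(-√(2/π)·z) for z ≥ 0. -/
theorem normal_cdf_lower_bound :
    ∀ z : ℝ, 0 ≤ z →
      1 - (1 / 2) * Real.exp (-(Real.sqrt (2 / Real.pi)) * z)
        ≤ (Real.sqrt (2 * Real.pi))⁻¹ * ∫ t in Set.Iic z, Real.exp (-t ^ 2 / 2) := by
  intro z hz
  set a : ℝ := Real.sqrt (2 / Real.pi) with ha_def
  set S : ℝ := Real.sqrt (2 * Real.pi) with hS_def
  have hpi := Real.pi_pos
  have ha : 0 < a := Real.sqrt_pos.mpr (by positivity)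
  have hS : 0 < S := Real.sqrt_pos.mpr (by positivity)
  have haS : a * S = 2 := by
    rw [ha_def, hS_def, ← Real.sqrt_mul (by positivity)]
    rw [show 2 / Real.pi * (2 * Real.pi) = 4 by field_simp; ring]
    rw [show (4:ℝ) = 2^2 by norm_num, Real.sqrt_sq (by norm_num)]
  -- key: ∫ t in Ioi z, exp(-t^2/2) ≤ exp(-a*z)/a
  have key : ∫ t in Ioi z, Real.exp (-t ^ 2 / 2) ≤ Real.exp (-a * z) / a := by
    rcases le_or_gt z (2 * a) with hcase | hcase
    · -- z ≤ 2a : compare on Ioc 0 z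
      have hsplit : (∫ t in Ioc 0 z, Real.exp (-t ^ 2 / 2)) + ∫ t in Ioi z, Real.exp (-t ^ 2 / 2)
          = S / 2 := by
        rw [← gauss_half, ← setIntegral_union (Ioc_disjoint_Ioi le_rfl) measurableSet_Ioi
          gauss_integrable.integrableOn gauss_integrable.integrableOn, Ioc_union_Ioi_eq_Ioi hz]
      have hsplit' : (∫ t in Ioc 0 z, Real.exp (-a * t)) + ∫ t in Ioi z, Real.exp (-a * t)
          = 1 / a := by
        rw [← setIntegral_union (Ioc_disjoint_Ioi le_rfl) measurableSet_Ioi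
          ((exp_neg_integrableOn_Ioi 0 ha).mono_set Ioc_subset_Ioi_self)
          (exp_neg_integrableOn_Ioi z ha), Ioc_union_Ioi_eq_Ioi hz, exp_Ioi a 0 ha]
        simp
      have hmono : ∫ t in Ioc 0 z, Real.exp (-a * t) ≤ ∫ t in Ioc 0 z, Real.exp (-t ^ 2 / 2) := by
        apply setIntegral_mono_on ((exp_neg_integrableOn_Ioi 0 ha).mono_set Ioc_subset_Ioi_self)
          (gauss_integrable.integrableOn) measurableSet_Ioc
        intro t ht
        apply Real.exp_le_exp.mpr
        nlinarith [ht.1, ht.2]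
      have hEz : ∫ t in Ioi z, Real.exp (-a * t) = Real.exp (-a * z) / a := exp_Ioi a z ha
      have hS2 : S / 2 = 1 / a := by field_simp; linarith [haS]
      linarith
    · -- z > 2a : pointwise on Ioi z
      have hmono : ∫ t in Ioi z, Real.exp (-t ^ 2 / 2) ≤ ∫ t in Ioi z, Real.exp (-a * t) := by
        apply setIntegral_mono_on gauss_integrable.integrableOn
          (exp_neg_integrableOn_Ioi z ha) measurableSet_Ioi
        intro t ht
        apply Real.exp_le_exp.mpr
        have ht' : 2 * a < t := lt_trans hcase ht
        nlinarith [ha.le]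
      rw [exp_Ioi a z ha] at hmono
      exact hmono
  have hIic : ∫ t in Iic z, Real.exp (-t ^ 2 / 2)
      = S - ∫ t in Ioi z, Real.exp (-t ^ 2 / 2) := by
    have h := integral_add_compl (measurableSet_Iic (a := z)) gauss_integrable
    rw [compl_Iic, gauss_total, ← hS_def] at h
    linarith
  rw [hIic]
  have hSa : S / 2 * Real.exp (-a * z) = Real.exp (-a * z) / a := by
    have : S / 2 = 1 / a := by field_simp; linarith [haS]
    rw [this]; ring
  rw [mul_sub, inv_mul_cancel₀ (ne_of_gt hS)]
  have : S⁻¹ * ∫ t in Ioi z, Real.exp (-t ^ 2 / 2) ≤ S⁻¹ * (Real.exp (-a * z) / a) :=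
    mul_le_mul_of_nonneg_left key (by positivity)
  have heq : S⁻¹ * (Real.exp (-a * z) / a) = 1 / 2 * Real.exp (-a * z) := by
    field_simp
    nlinarith [haS]
  linarith
end

section
/- Let X be a positive random variable such that E[X^{−f}] < ∞ for all f in an interval. Define g(f) = E[X^{−f}] · E[X^{−(1−f)}]. Then g is log-convex (hence convex): for all f₁, f₂ and c ∈ [0,1], g(c f₁ + (1−c) f₂) ≤ g(f₁)^c · g(f₂)^{1−c}; moreover g(f) = g(1−f) for all f, and g attains a global minimum at f = 1/2. -/
open MeasureTheory

/-- Hölder step: `E[X^{-(c s + (1-c) t)}] ≤ E[X^{-s}]^c E[X^{-t}]^{1-c}`. -/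
lemma fpc_holder_aux {Ω : Type*} [MeasurableSpace Ω]
    (μ : Measure Ω) (X : Ω → ℝ)
    (hX : ∀ᵐ ω ∂μ, 0 < X ω)
    (hint : ∀ f : ℝ, Integrable (fun ω => X ω ^ (-f)) μ)
    {c : ℝ} (hc0 : 0 < c) (hc1 : c < 1) (s t : ℝ) :
    ∫ ω, X ω ^ (-(c * s + (1 - c) * t)) ∂μ
      ≤ (∫ ω, X ω ^ (-s) ∂μ) ^ c * (∫ ω, X ω ^ (-t) ∂μ) ^ (1 - c) := by
  have hc1' : 0 < 1 - c := by linarith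
  have hpq : (1/c).HolderConjugate (1/(1-c)) := by
    rw [Real.holderConjugate_iff]; constructor
    · rw [lt_one_div one_pos hc0]; simpa using hc1
    · rw [one_div, one_div, inv_inv, inv_inv]; ring
  have hs1 : MemLp (fun ω => X ω ^ (-s)) 1 μ := (memLp_one_iff_integrable).mpr (hint s)
  have ht1 : MemLp (fun ω => X ω ^ (-t)) 1 μ := (memLp_one_iff_integrable).mpr (hint t)
  have hdiv : ∀ {a : ℝ}, 0 < a → (1 : ENNReal) / ENNReal.ofReal a = ENNReal.ofReal (1/a) := by
    intro a ha
    rw [one_div, one_div, ← ENNReal.ofReal_inv_of_pos ha]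
  have hf : MemLp (fun ω => ‖X ω ^ (-s)‖ ^ c) (ENNReal.ofReal (1/c)) μ := by
    have h := hs1.norm_rpow_div (ENNReal.ofReal c)
    rw [ENNReal.toReal_ofReal hc0.le, hdiv hc0] at h
    exact h
  have hg : MemLp (fun ω => ‖X ω ^ (-t)‖ ^ (1 - c)) (ENNReal.ofReal (1/(1-c))) μ := by
    have h := ht1.norm_rpow_div (ENNReal.ofReal (1-c))
    rw [ENNReal.toReal_ofReal hc1'.le, hdiv hc1'] at h
    exact h
  have hfnn : 0 ≤ᵐ[μ] fun ω => ‖X ω ^ (-s)‖ ^ c :=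
    Filter.Eventually.of_forall fun ω => Real.rpow_nonneg (norm_nonneg _) _
  have hgnn : 0 ≤ᵐ[μ] fun ω => ‖X ω ^ (-t)‖ ^ (1 - c) :=
    Filter.Eventually.of_forall fun ω => Real.rpow_nonneg (norm_nonneg _) _
  have key := integral_mul_le_Lp_mul_Lq_of_nonneg hpq hfnn hgnn hf hg
  have hL : ∫ ω, ‖X ω ^ (-s)‖ ^ c * ‖X ω ^ (-t)‖ ^ (1 - c) ∂μ
      = ∫ ω, X ω ^ (-(c * s + (1 - c) * t)) ∂μ := by
    refine integral_congr_ae ?_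
    filter_upwards [hX] with ω hω
    rw [Real.norm_of_nonneg (Real.rpow_nonneg hω.le _),
      Real.norm_of_nonneg (Real.rpow_nonneg hω.le _),
      ← Real.rpow_mul hω.le, ← Real.rpow_mul hω.le, ← Real.rpow_add hω]
    ring_nf
  have hRs : ∫ ω, (‖X ω ^ (-s)‖ ^ c) ^ (1/c) ∂μ = ∫ ω, X ω ^ (-s) ∂μ := by
    refine integral_congr_ae ?_
    filter_upwards [hX] with ω hω
    rw [Real.norm_of_nonneg (Real.rpow_nonneg hω.le _),
      ← Real.rpow_mul (Real.rpow_nonneg hω.le _), mul_one_div_cancel hc0.ne',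
      Real.rpow_one]
  have hRt : ∫ ω, (‖X ω ^ (-t)‖ ^ (1-c)) ^ (1/(1-c)) ∂μ = ∫ ω, X ω ^ (-t) ∂μ := by
    refine integral_congr_ae ?_
    filter_upwards [hX] with ω hω
    rw [Real.norm_of_nonneg (Real.rpow_nonneg hω.le _),
      ← Real.rpow_mul (Real.rpow_nonneg hω.le _), mul_one_div_cancel hc1'.ne',
      Real.rpow_one]
  rw [hL, hRs, hRt, one_div_one_div, one_div_one_div] at key
  exact key

/-- g(f) = E[X^{-f}]·E[X^{-(1-f)}] is log-convex, symmetric about f = 1/2,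
    and attains its global minimum at f = 1/2. -/
theorem fpc_logconvex_min_at_half {Ω : Type*} [MeasurableSpace Ω]
    (μ : Measure Ω) [IsProbabilityMeasure μ] (X : Ω → ℝ)
    (hX : ∀ᵐ ω ∂μ, 0 < X ω)
    (hint : ∀ f : ℝ, Integrable (fun ω => X ω ^ (-f)) μ) :
    (∀ f₁ f₂ : ℝ, ∀ c ∈ Set.Icc (0:ℝ) 1,
      ((∫ ω, X ω ^ (-(c * f₁ + (1 - c) * f₂)) ∂μ)
          * ∫ ω, X ω ^ (-(1 - (c * f₁ + (1 - c) * f₂))) ∂μ)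
        ≤ ((∫ ω, X ω ^ (-f₁) ∂μ) * ∫ ω, X ω ^ (-(1 - f₁)) ∂μ) ^ c
          * ((∫ ω, X ω ^ (-f₂) ∂μ) * ∫ ω, X ω ^ (-(1 - f₂)) ∂μ) ^ (1 - c)) ∧
    (∀ f : ℝ, (∫ ω, X ω ^ (-f) ∂μ) * ∫ ω, X ω ^ (-(1 - f)) ∂μ
      = (∫ ω, X ω ^ (-(1 - f)) ∂μ) * ∫ ω, X ω ^ (-(1 - (1 - f))) ∂μ) ∧
    (∀ f : ℝ, (∫ ω, X ω ^ (-(1/2 : ℝ)) ∂μ) * ∫ ω, X ω ^ (-(1 - (1/2 : ℝ))) ∂μ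
      ≤ (∫ ω, X ω ^ (-f) ∂μ) * ∫ ω, X ω ^ (-(1 - f)) ∂μ) := by
  have Inn : ∀ s : ℝ, 0 ≤ ∫ ω, X ω ^ (-s) ∂μ := by
    intro s
    refine integral_nonneg_of_ae ?_
    filter_upwards [hX] with ω hω
    exact Real.rpow_nonneg hω.le _
  have part1 : ∀ f₁ f₂ : ℝ, ∀ c ∈ Set.Icc (0:ℝ) 1,
      ((∫ ω, X ω ^ (-(c * f₁ + (1 - c) * f₂)) ∂μ)
          * ∫ ω, X ω ^ (-(1 - (c * f₁ + (1 - c) * f₂))) ∂μ)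
        ≤ ((∫ ω, X ω ^ (-f₁) ∂μ) * ∫ ω, X ω ^ (-(1 - f₁)) ∂μ) ^ c
          * ((∫ ω, X ω ^ (-f₂) ∂μ) * ∫ ω, X ω ^ (-(1 - f₂)) ∂μ) ^ (1 - c) := by
    rintro f₁ f₂ c ⟨hc0, hc1⟩
    rcases eq_or_lt_of_le hc0 with h0 | h0
    · subst h0
      norm_num
    rcases eq_or_lt_of_le hc1 with h1 | h1
    · subst h1
      norm_num
    · have ha := fpc_holder_aux μ X hX hint h0 h1 f₁ f₂
      have hb := fpc_holder_aux μ X hX hint h0 h1 (1 - f₁) (1 - f₂)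
      have e : c * (1 - f₁) + (1 - c) * (1 - f₂) = 1 - (c * f₁ + (1 - c) * f₂) := by ring
      rw [e] at hb
      have hmul := mul_le_mul ha hb (Inn _) (mul_nonneg (Real.rpow_nonneg (Inn _) _) (Real.rpow_nonneg (Inn _) _))
      calc _ ≤ _ := hmul
        _ = _ := by
          rw [Real.mul_rpow (Inn f₁) (Inn (1-f₁)), Real.mul_rpow (Inn f₂) (Inn (1-f₂))]
          ring
  refine ⟨part1, ?_, ?_⟩
  · intro f
    have e : (1:ℝ) - (1 - f) = f := by ring
    rw [e, mul_comm]
  · intro f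
    have h := part1 f (1 - f) (1/2) ⟨by norm_num, by norm_num⟩
    have e : (1/2 : ℝ) * f + (1 - 1/2) * (1 - f) = 1/2 := by ring
    rw [e] at h
    have e2 : (1:ℝ) - (1 - f) = f := by ring
    rw [e2] at h
    have hnn : 0 ≤ (∫ ω, X ω ^ (-f) ∂μ) * ∫ ω, X ω ^ (-(1 - f)) ∂μ :=
      mul_nonneg (Inn f) (Inn (1 - f))
    calc _ ≤ _ := h
      _ = _ := by
        rw [mul_comm (∫ ω, X ω ^ (-(1-f)) ∂μ) (∫ ω, X ω ^ (-f) ∂μ),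
          ← Real.rpow_add' hnn (by norm_num : (1/2 : ℝ) + (1 - 1/2) ≠ 0)]
        norm_num
end
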